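/- Let p be a prime with p ≥ 53 and let f be a squarefree monic polynomial of degree 9 over F_p. Then there exists a point (x,y) ∈ F_p × F_p with y² = f(x); that is, every hyperelliptic curve of genus 4 over F_p has an affine F_p-rational point for all primes p ≥ 53. -/

import Mathlib

open Polynomial

variable {R : Type*} [CommRing R]

/-- Degree bound for the Mit'kin step operator. -/
lemma mitkin_step_natDegree_le {f U : R[X]} {n : ℕ} (c : ℕ) (hn : 1 ≤ n)
    (hf : f.natDegree ≤ 9) (hU : U.natDegree ≤ n) :
    (2 * (f * derivative U) - (c : R[X]) * (derivative f * U)).natDegree ≤ n + 8 := by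
  refine le_trans (natDegree_sub_le _ _) (max_le ?_ ?_)
  · refine le_trans natDegree_mul_le ?_
    have h1 : (derivative U).natDegree ≤ n - 1 :=
      le_trans (natDegree_derivative_le U) (by omega)
    have h2 : (f * derivative U).natDegree ≤ 9 + (n - 1) :=
      le_trans natDegree_mul_le (by omega)
    have h3 : (2 : R[X]).natDegree = 0 := natDegree_ofNat 2
    omega
  · refine le_trans natDegree_mul_le ?_
    have h1 : (derivative f).natDegree ≤ 8 :=
      le_trans (natDegree_derivative_le f) (by omega)
    have h2 : (derivative f * U).natDegree ≤ 8 + n :=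
      le_trans natDegree_mul_le (by omega)
    have h3 : ((c : ℕ) : R[X]).natDegree = 0 := natDegree_natCast c
    omega

/-- Top-coefficient formula for the Mit'kin step operator. -/
lemma mitkin_step_coeff {f U : R[X]} {n : ℕ} (c : ℕ) (hn : 1 ≤ n)
    (hf : f.natDegree ≤ 9) (hU : U.natDegree ≤ n) (hf9 : f.coeff 9 = 1) :
    (2 * (f * derivative U) - (c : R[X]) * (derivative f * U)).coeff (n + 8)
      = 2 * ((n : R) * U.coeff n) - (c : R) * (9 * U.coeff n) := by
  rw [coeff_sub]
  have hA : (2 * (f * derivative U)).coeff (n + 8) = 2 * ((n : R) * U.coeff n) := by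
    rw [two_mul, coeff_add, ← two_mul]
    have hdU : (derivative U).natDegree ≤ n - 1 :=
      le_trans (natDegree_derivative_le U) (by omega)
    have he : n + 8 = 9 + (n - 1) := by omega
    rw [he, coeff_mul_add_eq_of_natDegree_le hf hdU, hf9, coeff_derivative]
    have : n - 1 + 1 = n := by omega
    rw [this, Nat.cast_sub hn]
    push_cast
    ring
  have hB : ((c : R[X]) * (derivative f * U)).coeff (n + 8) = (c : R) * (9 * U.coeff n) := by
    rw [coeff_natCast_mul]
    have hdf : (derivative f).natDegree ≤ 8 :=
      le_trans (natDegree_derivative_le f) (by omega)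
    have he : n + 8 = 8 + n := by omega
    rw [he, coeff_mul_add_eq_of_natDegree_le hdf hU, coeff_derivative, hf9]
    push_cast
    ring
  rw [hA, hB]


/-- (Via Mit'kin's bound.) Every hyperelliptic curve of genus 4, `y² = f(x)` with `f`
squarefree monic of degree 9 over `F_p`, has an affine `F_p`-rational point for every
prime `p ≥ 53`. -/
theorem genus_four_has_point_mitkin (p : ℕ) (hp : p.Prime) (hge : 53 ≤ p)
    (f : Polynomial (ZMod p)) (hmonic : f.Monic) (hdeg : f.natDegree = 9)
    (hsf : Squarefree f) :
    ∃ x y : ZMod p, y ^ 2 = f.eval x := by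
  by_contra hcon
  push_neg at hcon
  haveI : Fact p.Prime := ⟨hp⟩
  obtain ⟨t, ht⟩ := hp.odd_of_ne_two (by omega)
  set m : ℕ := p / 2 with hm_def
  have hm2 : 2 * m + 1 = p := by omega
  -- every value of f is a nonzero non-square
  have h1 : ∀ a : ZMod p, (f.eval a) ^ m = -1 := by
    intro a
    have h0 : f.eval a ≠ 0 := by
      intro h
      exact hcon a 0 (by rw [h]; ring)
    have hsq : ¬ IsSquare (f.eval a) := by
      rintro ⟨y, hy⟩
      exact hcon a y (by rw [hy]; ring)
    have h2 : (f.eval a) ^ m ≠ 1 := by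
      rw [hm_def]
      exact fun h => hsq ((ZMod.euler_criterion p h0).mpr h)
    have h3 : ((f.eval a) ^ m) * ((f.eval a) ^ m) = 1 := by
      rw [← pow_add]
      have : m + m = p - 1 := by omega
      rw [this]
      exact ZMod.pow_card_sub_one_eq_one h0
    rcases mul_self_eq_one_iff.mp h3 with h | h
    · exact absurd h h2
    · exact h
  -- the polynomial X^p - X divides f^m + 1
  set s : Polynomial (ZMod p) := X ^ p - X with hs_def
  have hsmonic : s.Monic := by
    rw [hs_def]
    exact monic_X_pow_sub (by
      rw [degree_X]
      exact_mod_cast (by omega : (1:ℕ) < p))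
  have hsdeg : s.natDegree = p := by
    rw [hs_def]
    exact FiniteField.X_pow_card_sub_X_natDegree_eq _ (by omega)
  have hr : (f ^ m + 1) %ₘ s = 0 := by
    apply Polynomial.eq_zero_of_natDegree_lt_card_of_eval_eq_zero _ Function.injective_id
    · intro a
      rw [modByMonic_eq_sub_mul_div _ s]
      simp only [id_eq, eval_sub, eval_add, eval_mul, eval_pow, eval_one, eval_X, hs_def]
      rw [h1 a, ZMod.pow_card]
      ring
    · refine lt_of_lt_of_le (natDegree_modByMonic_lt _ hsmonic ?_) ?_
      · intro h
        have := congrArg natDegree h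
        rw [hsdeg, natDegree_one] at this
        omega
      · rw [hsdeg, ZMod.card]
  have A0 : s * ((f ^ m + 1) /ₘ s) = f ^ m + 1 := by
    have := modByMonic_add_div (f ^ m + 1) s
    rw [hr, zero_add] at this
    exact this
  set q0 : Polynomial (ZMod p) := (f ^ m + 1) /ₘ s with hq0_def
  -- derivative of s is -1
  have hs' : derivative s = -1 := by
    rw [hs_def]
    simp [derivative_X_pow, ZMod.natCast_self]
  clear_value s q0
  have hm1 : 1 ≤ m := by omega
  -- auxiliary constant fact : C m * 2 = -1
  have e3 : ((m : ZMod p)) * 2 = -1 := by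
    have h2m : ((2 * m : ℕ) : ZMod p) = ((p - 1 : ℕ) : ZMod p) := by
      congr 1
      omega
    rw [Nat.cast_sub (by omega : 1 ≤ p), Nat.cast_one] at h2m
    push_cast at h2m
    rw [ZMod.natCast_self] at h2m
    linear_combination h2m
  have E3 : (C ((m : ℕ) : ZMod p)) * 2 = (-1 : Polynomial (ZMod p)) := by
    have : (C ((m : ℕ) : ZMod p)) * 2 = C (((m : ℕ) : ZMod p) * 2) := by
      rw [map_mul, map_ofNat]
    rw [this, e3, map_neg, map_one]
  have E2 : f ^ (m - 1) * f = f ^ m := by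
    rw [← pow_succ]
    congr 1
    omega
  have E1 : -1 * q0 + s * derivative q0 = C ((m : ℕ) : ZMod p) * f ^ (m - 1) * derivative f := by
    have E := congrArg derivative A0
    rw [derivative_mul, derivative_add, derivative_one, add_zero, derivative_pow, hs'] at E
    exact E
  set q1 : Polynomial (ZMod p) := 2 * (f * derivative q0) + derivative f * q0 with hq1_def
  clear_value q1
  have I1 : s * q1 = 2 * (f * q0) + derivative f := by
    rw [hq1_def]
    linear_combination (2*f) * E1 + (derivative f) * A0
      + (2 * (C ((m : ℕ) : ZMod p)) * derivative f) * E2 + (f ^ m * derivative f) * E3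
  -- ============ the chain of identities ============
  set q2 : Polynomial (ZMod p) :=
    2 * (f * derivative q1) - ((1:ℕ) : Polynomial (ZMod p)) * (derivative f * q1) with hq2_def
  clear_value q2
  set U2 : Polynomial (ZMod p) :=
    2 * (f * derivative (derivative f))
      - ((1:ℕ) : Polynomial (ZMod p)) * (derivative f * derivative f) with hU2_def
  clear_value U2
  have I2 : s * q2 = 4 * (f * q1) + U2 := by
    have E := congrArg derivative I1
    simp only [derivative_mul, derivative_add, derivative_ofNat, zero_mul, zero_add, hs'] at E
    rw [hq2_def, hU2_def]
    linear_combination (2*f) * E - (derivative f) * I1 - (2*f) * hq1_def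
  set q3 : Polynomial (ZMod p) :=
    2 * (f * derivative q2) - ((3:ℕ) : Polynomial (ZMod p)) * (derivative f * q2) with hq3_def
  clear_value q3
  set U3 : Polynomial (ZMod p) :=
    2 * (f * derivative U2) - ((3:ℕ) : Polynomial (ZMod p)) * (derivative f * U2) with hU3_def
  clear_value U3
  have I3 : s * q3 = 6 * (f * q2) + U3 := by
    have E := congrArg derivative I2
    simp only [derivative_mul, derivative_add, derivative_ofNat, zero_mul, zero_add, hs'] at E
    rw [hq3_def, hU3_def]
    linear_combination (2*f) * E - 3 * (derivative f) * I2 - (4*f) * hq2_def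
  set q4 : Polynomial (ZMod p) :=
    2 * (f * derivative q3) - ((5:ℕ) : Polynomial (ZMod p)) * (derivative f * q3) with hq4_def
  clear_value q4
  set U4 : Polynomial (ZMod p) :=
    2 * (f * derivative U3) - ((5:ℕ) : Polynomial (ZMod p)) * (derivative f * U3) with hU4_def
  clear_value U4
  have I4 : s * q4 = 8 * (f * q3) + U4 := by
    have E := congrArg derivative I3
    simp only [derivative_mul, derivative_add, derivative_ofNat, zero_mul, zero_add, hs'] at E
    rw [hq4_def, hU4_def]
    linear_combination (2*f) * E - 5 * (derivative f) * I3 - (6*f) * hq3_def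
  set q5 : Polynomial (ZMod p) :=
    2 * (f * derivative q4) - ((7:ℕ) : Polynomial (ZMod p)) * (derivative f * q4) with hq5_def
  clear_value q5
  set U5 : Polynomial (ZMod p) :=
    2 * (f * derivative U4) - ((7:ℕ) : Polynomial (ZMod p)) * (derivative f * U4) with hU5_def
  clear_value U5
  have I5 : s * q5 = 10 * (f * q4) + U5 := by
    have E := congrArg derivative I4
    simp only [derivative_mul, derivative_add, derivative_ofNat, zero_mul, zero_add, hs'] at E
    rw [hq5_def, hU5_def]
    linear_combination (2*f) * E - 7 * (derivative f) * I4 - (8*f) * hq4_def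
  -- ============ degree and coefficient bookkeeping ============
  have hf9 : f.coeff 9 = 1 := by rw [← hdeg]; exact hmonic.coeff_natDegree
  have hfdeg9 : f.natDegree ≤ 9 := le_of_eq hdeg
  have hdf_deg : (derivative f).natDegree ≤ 8 :=
    le_trans (natDegree_derivative_le f) (by omega)
  have hdf8 : (derivative f).coeff 8 = 9 := by
    rw [coeff_derivative, hf9]; norm_num
  -- U degree bounds
  have hU2deg : U2.natDegree ≤ 16 := by
    rw [hU2_def]
    exact le_trans (mitkin_step_natDegree_le 1 (by norm_num) hfdeg9 hdf_deg) (by norm_num)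
  have hU3deg : U3.natDegree ≤ 24 := by
    rw [hU3_def]
    exact le_trans (mitkin_step_natDegree_le 3 (by norm_num) hfdeg9 hU2deg) (by norm_num)
  have hU4deg : U4.natDegree ≤ 32 := by
    rw [hU4_def]
    exact le_trans (mitkin_step_natDegree_le 5 (by norm_num) hfdeg9 hU3deg) (by norm_num)
  have hU5deg : U5.natDegree ≤ 40 := by
    rw [hU5_def]
    exact le_trans (mitkin_step_natDegree_le 7 (by norm_num) hfdeg9 hU4deg) (by norm_num)
  -- U top coefficients
  have hU2c : U2.coeff 16 = 63 := by
    show U2.coeff (8 + 8) = 63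
    rw [hU2_def, mitkin_step_coeff 1 (by norm_num) hfdeg9 hdf_deg hf9, hdf8]
    push_cast
    norm_num
  have hU3c : U3.coeff 24 = 315 := by
    show U3.coeff (16 + 8) = 315
    rw [hU3_def, mitkin_step_coeff 3 (by norm_num) hfdeg9 hU2deg hf9, hU2c]
    push_cast
    norm_num
  have hU4c : U4.coeff 32 = 945 := by
    show U4.coeff (24 + 8) = 945
    rw [hU4_def, mitkin_step_coeff 5 (by norm_num) hfdeg9 hU3deg hf9, hU3c]
    push_cast
    norm_num
  have hU5c : U5.coeff 40 = 945 := by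
    show U5.coeff (32 + 8) = 945
    rw [hU5_def, mitkin_step_coeff 7 (by norm_num) hfdeg9 hU4deg hf9, hU4c]
    push_cast
    norm_num
  -- q0 is nonzero of the right degree
  have hFm : (f ^ m + 1).natDegree = 9 * m := by
    have h1 : (f ^ m).natDegree = 9 * m := by rw [natDegree_pow, hdeg]; ring
    calc (f ^ m + 1).natDegree = (f ^ m + C 1).natDegree := by rw [map_one]
      _ = (f ^ m).natDegree := natDegree_add_C
      _ = 9 * m := h1
  have hq0ne : q0 ≠ 0 := by
    intro h
    rw [h, mul_zero] at A0
    have h2 := congrArg natDegree A0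
    rw [natDegree_zero, hFm] at h2
    omega
  have hd0 : p + q0.natDegree = 9 * m := by
    have h2 := congrArg natDegree A0
    rw [natDegree_mul' (by
      rw [hsmonic.leadingCoeff, one_mul]
      exact leadingCoeff_ne_zero.mpr hq0ne), hsdeg, hFm] at h2
    exact h2
  -- main degree bound on q4
  have hble : (10 * (f * q4)).natDegree ≤ 14 ∧ (10 * (f * q4)).coeff 40 = 0 := by
    by_cases h40 : q4 = 0
    · rw [h40]
      norm_num
    · have hq3ne : q3 ≠ 0 := by
        intro h
        apply h40
        rw [hq4_def, h]
        simp
      have hq2ne : q2 ≠ 0 := by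
        intro h
        apply hq3ne
        rw [hq3_def, h]
        simp
      have hq1ne : q1 ≠ 0 := by
        intro h
        apply hq2ne
        rw [hq2_def, h]
        simp
      have key : ∀ (qa qb U : Polynomial (ZMod p)) (c : ℕ), qb ≠ 0 →
          s * qb = (c : Polynomial (ZMod p)) * (f * qa) + U →
          p + qb.natDegree ≤ max (9 + qa.natDegree) U.natDegree := by
        intro qa qb U c hne hI
        have h2 := congrArg natDegree hI
        rw [natDegree_mul' (by
          rw [hsmonic.leadingCoeff, one_mul]
          exact leadingCoeff_ne_zero.mpr hne), hsdeg] at h2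
        rw [h2]
        refine le_trans (natDegree_add_le _ _) (max_le_max ?_ le_rfl)
        refine le_trans natDegree_mul_le ?_
        have h3 := natDegree_mul_le (p := f) (q := qa)
        have h4 : ((c : ℕ) : Polynomial (ZMod p)).natDegree = 0 := natDegree_natCast c
        omega
      have hd1 : p + q1.natDegree ≤ max (9 + q0.natDegree) 8 := by
        refine le_trans (key q0 q1 (derivative f) 2 hq1ne (by
          rw [I1]; push_cast; ring)) ?_
        exact max_le_max le_rfl hdf_deg
      have hd2 : p + q2.natDegree ≤ max (9 + q1.natDegree) 16 := by
        refine le_trans (key q1 q2 U2 4 hq2ne (by rw [I2]; push_cast; ring)) ?_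
        exact max_le_max le_rfl hU2deg
      have hd3 : p + q3.natDegree ≤ max (9 + q2.natDegree) 24 := by
        refine le_trans (key q2 q3 U3 6 hq3ne (by rw [I3]; push_cast; ring)) ?_
        exact max_le_max le_rfl hU3deg
      have hd4 : p + q4.natDegree ≤ max (9 + q3.natDegree) 32 := by
        refine le_trans (key q3 q4 U4 8 h40 (by rw [I4]; push_cast; ring)) ?_
        exact max_le_max le_rfl hU4deg
      have hq4d : q4.natDegree ≤ 5 := by
        rcases le_max_iff.mp hd1 with h1 | h1 <;>
          rcases le_max_iff.mp hd2 with h2 | h2 <;>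
            rcases le_max_iff.mp hd3 with h3 | h3 <;>
              rcases le_max_iff.mp hd4 with h4 | h4 <;> omega
      constructor
      · refine le_trans natDegree_mul_le ?_
        have h3 := natDegree_mul_le (p := f) (q := q4)
        have h4 : (10 : Polynomial (ZMod p)).natDegree = 0 := natDegree_ofNat 10
        omega
      · refine coeff_eq_zero_of_natDegree_lt (lt_of_le_of_lt ?_ (by norm_num : (14:ℕ) < 40))
        refine le_trans natDegree_mul_le ?_
        have h3 := natDegree_mul_le (p := f) (q := q4)
        have h4 : (10 : Polynomial (ZMod p)).natDegree = 0 := natDegree_ofNat 10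
        omega
  -- 945 is invertible mod p
  have h945 : (945 : ZMod p) ≠ 0 := by
    intro h
    have h945' : ((945 : ℕ) : ZMod p) = 0 := by exact_mod_cast h
    have hdvd : p ∣ 945 := (ZMod.natCast_eq_zero_iff 945 p).mp h945'
    have h1 : p ∣ 27 * 35 := by rwa [show (27 * 35 : ℕ) = 945 by norm_num]
    rcases (Nat.Prime.dvd_mul hp).mp h1 with h2 | h2
    · have h3 : p ∣ 3 := hp.dvd_of_dvd_pow (n := 3) (by rwa [show (3:ℕ) ^ 3 = 27 by norm_num])
      have := Nat.le_of_dvd (by norm_num) h3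
      omega
    · rw [show (35:ℕ) = 5 * 7 by norm_num] at h2
      rcases (Nat.Prime.dvd_mul hp).mp h2 with h3 | h3
      · have := Nat.le_of_dvd (by norm_num) h3
        omega
      · have := Nat.le_of_dvd (by norm_num) h3
        omega
  -- final contradiction from I5
  have hC : (s * q5).coeff 40 = 945 := by
    rw [I5, coeff_add, hble.2, hU5c, zero_add]
  have hq5ne : q5 ≠ 0 := by
    intro h
    rw [h, mul_zero, coeff_zero] at hC
    exact h945 hC.symm
  have hdeg5 : (s * q5).natDegree ≤ 40 := by
    rw [I5]
    refine le_trans (natDegree_add_le _ _) (max_le (le_trans hble.1 (by norm_num)) hU5deg)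
  have hfin : (s * q5).natDegree = p + q5.natDegree := by
    rw [natDegree_mul' (by
      rw [hsmonic.leadingCoeff, one_mul]
      exact leadingCoeff_ne_zero.mpr hq5ne), hsdeg]
  omega
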